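/- Let (X,d) be a doubling metric space with doubling constant D ≥ 1. For every ε, t > 0 there exists δ₀ = δ₀(ε,D,t) > 0 such that for all δ ∈ (0,δ₀]: every δ-separated (δ,t,C)-set P ⊂ B(x₀,1) ⊂ X can be partitioned into N ≤ C·|P|·δ^{t−ε} disjoint subsets P₁,…,P_N, each of which is a Katz–Tao (δ,t,1)-set. -/

import Mathlib

open Metric Set MeasureTheory
open scoped ENNReal NNReal

noncomputable section

/-- The plane `ℝ²`. -/
abbrev E2 := EuclideanSpace ℝ (Fin 2)

/-- The `δ`-covering number of a set `A`: the least number of closed balls of radius `δ`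
needed to cover `A`. -/
noncomputable def covNum {X : Type*} [PseudoMetricSpace X] (δ : ℝ) (A : Set X) : ℕ :=
  sInf {n | ∃ S : Finset X, S.card = n ∧ A ⊆ ⋃ x ∈ S, closedBall x δ}

/-- `P` is a `(δ,s,C)`-set: `|P ∩ B(x,r)|_δ ≤ C r^s |P|_δ` for all `x` and `r ≥ δ`. -/
def IsDeltaSet {X : Type*} [PseudoMetricSpace X] (δ s C : ℝ) (P : Set X) : Prop :=
  ∀ (x : X) (r : ℝ), δ ≤ r →
    (covNum δ (P ∩ closedBall x r) : ℝ) ≤ C * r ^ s * (covNum δ P : ℝ)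

/-- `P` is `δ`-separated. -/
def IsSep {X : Type*} [PseudoMetricSpace X] (δ : ℝ) (P : Set X) : Prop :=
  ∀ x ∈ P, ∀ y ∈ P, x ≠ y → δ ≤ dist x y

/-- A metric space is doubling with constant `D`: every closed ball of radius `r` can be
covered by `D` closed balls of radius `r/2`. -/
def IsDoubling (X : Type*) [MetricSpace X] (D : ℕ) : Prop :=
  ∀ (x : X) (r : ℝ), 0 < r →
    ∃ S : Finset X, S.card ≤ D ∧ closedBall x r ⊆ ⋃ y ∈ S, closedBall y (r / 2)

/-- A `δ`-separated set `P` is a Katz–Tao `(δ,s,C)`-set if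
`|P ∩ B(x,r)| ≤ C (r/δ)^s` for all `x` and `r ≥ δ`. -/
def IsKatzTao {X : Type*} [MetricSpace X] (δ s C : ℝ) (P : Set X) : Prop :=
  IsSep δ P ∧ ∀ (x : X) (r : ℝ), δ ≤ r →
    (Nat.card ↥(P ∩ closedBall x r) : ℝ) ≤ C * (r / δ) ^ s

section Aux

open Filter Topology Function

variable {X : Type*} [MetricSpace X] {D : ℕ}

lemma KT.doubling_iterate (hX : IsDoubling X D) (x : X) (r : ℝ) (hr : 0 < r) (n : ℕ) :
    ∃ S : Finset X, S.card ≤ D ^ n ∧ closedBall x r ⊆ ⋃ y ∈ S, closedBall y (r / 2 ^ n) := by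
  classical
  induction n with
  | zero => exact ⟨{x}, by simp, by simp⟩
  | succ n ih =>
    obtain ⟨S, hScard, hScov⟩ := ih
    have hr2 : 0 < r / 2 ^ n := by positivity
    choose T hTcard hTcov using fun y : X => hX y (r / 2 ^ n) hr2
    refine ⟨S.biUnion T, ?_, ?_⟩
    · calc (S.biUnion T).card ≤ ∑ y ∈ S, (T y).card := Finset.card_biUnion_le
        _ ≤ ∑ _y ∈ S, D := Finset.sum_le_sum fun y _ => hTcard y
        _ = S.card * D := by simp [Finset.sum_const, mul_comm]
        _ ≤ D ^ n * D := Nat.mul_le_mul_right _ hScard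
        _ = D ^ (n + 1) := by ring
    · intro z hz
      obtain ⟨_, ⟨y, rfl⟩, hy⟩ := hScov hz
      simp only [mem_iUnion, exists_prop] at hy
      obtain ⟨hyS, hzy⟩ := hy
      have := hTcov y hzy
      simp only [mem_iUnion, exists_prop] at this ⊢
      obtain ⟨w, hwT, hzw⟩ := this
      refine ⟨w, Finset.mem_biUnion.2 ⟨y, hyS, hwT⟩, ?_⟩
      have : r / 2 ^ n / 2 = r / 2 ^ (n + 1) := by ring
      rwa [this] at hzw

lemma KT.sep_card_le (hX : IsDoubling X D) {δ r : ℝ} {Q : Set X} (hQ : IsSep δ Q)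
    {x : X} (hQb : Q ⊆ closedBall x r) (hr : 0 < r) {n : ℕ} (hn : 2 * (r / 2 ^ n) < δ) :
    Q.Finite ∧ Nat.card Q ≤ D ^ n := by
  classical
  obtain ⟨S, hScard, hScov⟩ := KT.doubling_iterate hX x r hr n
  have hsub : ∀ y : X, (Q ∩ closedBall y (r / 2 ^ n)).Subsingleton := by
    intro y a ha b hb
    by_contra hab
    have h1 := hQ a ha.1 b hb.1 hab
    have h2 : dist a b ≤ 2 * (r / 2 ^ n) := by
      have := dist_triangle a y b
      have ha' := ha.2; have hb' := hb.2
      rw [mem_closedBall] at ha' hb'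
      rw [dist_comm y b] at this
      linarith
    linarith
  have hchoice : ∀ q : Q, ∃ y : S, (q : X) ∈ closedBall (y : X) (r / 2 ^ n) := by
    intro q
    have := hScov (hQb q.2)
    simp only [mem_iUnion, exists_prop] at this
    obtain ⟨y, hyS, hy⟩ := this
    exact ⟨⟨y, hyS⟩, hy⟩
  choose f hf using hchoice
  have hinj : Function.Injective f := by
    intro a b hab
    have : (a : X) = b := hsub (f a) ⟨a.2, hf a⟩ ⟨b.2, by rw [hab]; exact hf b⟩
    exact Subtype.ext this
  have hfin : Finite Q := Finite.of_injective f hinj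
  refine ⟨Set.toFinite Q, ?_⟩
  calc Nat.card Q ≤ Nat.card S := Nat.card_le_card_of_injective f hinj
    _ = S.card := by simp [Nat.card_eq_fintype_card]
    _ ≤ D ^ n := hScard

lemma KT.covNum_le_card {δ : ℝ} (hδ : 0 ≤ δ) {A : Set X} (hA : A.Finite) :
    covNum δ A ≤ Nat.card A := by
  classical
  apply Nat.sInf_le
  refine ⟨hA.toFinset, ?_, ?_⟩
  · simp [Nat.card_eq_card_finite_toFinset hA]
  · intro a ha
    simp only [mem_iUnion, exists_prop]
    exact ⟨a, hA.mem_toFinset.2 ha, by simpa using hδ⟩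

lemma KT.one_le_covNum {δ : ℝ} {A : Set X} (hA : A.Nonempty) (hfin : A.Finite) (hδ : 0 ≤ δ) :
    1 ≤ covNum δ A := by
  by_contra h
  push_neg at h
  interval_cases h' : covNum δ A
  · have hne : {n | ∃ S : Finset X, S.card = n ∧ A ⊆ ⋃ x ∈ S, closedBall x δ}.Nonempty :=
      ⟨_, ⟨hfin.toFinset, rfl, by
        intro a ha
        simp only [mem_iUnion, exists_prop]
        exact ⟨a, hfin.mem_toFinset.2 ha, by simpa using hδ⟩⟩⟩
    have := Nat.sInf_mem hne
    rw [show sInf {n | ∃ S : Finset X, S.card = n ∧ A ⊆ ⋃ x ∈ S, closedBall x δ} = covNum δ A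
      from rfl, h'] at this
    obtain ⟨S, hS0, hScov⟩ := this
    rw [Finset.card_eq_zero] at hS0
    subst hS0
    obtain ⟨a, ha⟩ := hA
    simpa using hScov ha

lemma KT.card_le_covNum (hX : IsDoubling X D) {δ : ℝ} (hδ : 0 < δ) {A : Set X}
    (hA : IsSep δ A) (hfin : A.Finite) :
    Nat.card A ≤ D ^ 2 * covNum δ A := by
  classical
  have hne : {n | ∃ S : Finset X, S.card = n ∧ A ⊆ ⋃ x ∈ S, closedBall x δ}.Nonempty :=
    ⟨_, ⟨hfin.toFinset, rfl, by
      intro a ha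
      simp only [mem_iUnion, exists_prop]
      exact ⟨a, hfin.mem_toFinset.2 ha, by simpa using hδ.le⟩⟩⟩
  obtain ⟨S, hScard, hScov⟩ := Nat.sInf_mem hne
  rw [show sInf {n | ∃ S : Finset X, S.card = n ∧ A ⊆ ⋃ x ∈ S, closedBall x δ} = covNum δ A
    from rfl] at hScard
  have hpiece : ∀ y : X, Nat.card ↥(A ∩ closedBall y δ) ≤ D ^ 2 := by
    intro y
    have hsep : IsSep δ (A ∩ closedBall y δ) := fun a ha b hb hab => hA a ha.1 b hb.1 hab
    have := KT.sep_card_le hX hsep (inter_subset_right) hδ (n := 2) (by norm_num; linarith)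
    exact this.2
  have hpfin : ∀ y : X, (A ∩ closedBall y δ).Finite := fun y => hfin.inter_of_left _
  have hsub : hfin.toFinset ⊆ S.biUnion (fun y => (hpfin y).toFinset) := by
    intro a ha
    rw [Set.Finite.mem_toFinset] at ha
    have := hScov ha
    simp only [mem_iUnion, exists_prop] at this
    obtain ⟨y, hyS, hy⟩ := this
    exact Finset.mem_biUnion.2 ⟨y, hyS, (hpfin y).mem_toFinset.2 ⟨ha, hy⟩⟩
  calc Nat.card A = hfin.toFinset.card := Nat.card_eq_card_finite_toFinset hfin
    _ ≤ (S.biUnion (fun y => (hpfin y).toFinset)).card := Finset.card_le_card hsub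
    _ ≤ ∑ y ∈ S, ((hpfin y).toFinset).card := Finset.card_biUnion_le
    _ ≤ ∑ _y ∈ S, D ^ 2 := Finset.sum_le_sum fun y _ => by
        rw [← Nat.card_eq_card_finite_toFinset (hpfin y)]; exact hpiece y
    _ = S.card * D ^ 2 := by simp [mul_comm]
    _ = covNum δ A * D ^ 2 := by rw [hScard]
    _ = D ^ 2 * covNum δ A := mul_comm _ _

lemma KT.isKatzTao_singleton {δ t : ℝ} (hδ : 0 < δ) (ht : 0 < t) (p : X) :
    IsKatzTao δ t 1 {p} := by
  constructor
  · intro x hx y hy hxy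
    simp only [mem_singleton_iff] at hx hy
    exact absurd (hx.trans hy.symm) hxy
  · intro x r hr
    have h1 : ({p} ∩ closedBall x r : Set X) ⊆ {p} := inter_subset_left
    have : Nat.card ↥({p} ∩ closedBall x r : Set X) ≤ 1 := by
      have := Set.ncard_le_ncard h1 (finite_singleton p)
      simpa [Nat.card_coe_set_eq, Set.ncard_singleton] using this
    have h2 : (1 : ℝ) ≤ (r / δ) ^ t :=
      Real.one_le_rpow (by rw [le_div_iff₀ hδ]; linarith) ht.le
    calc (Nat.card ↥({p} ∩ closedBall x r : Set X) : ℝ) ≤ 1 := by exact_mod_cast this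
      _ ≤ 1 * (r / δ) ^ t := by linarith

lemma KT.exists_maximal_KT {δ t : ℝ} (hδ : 0 < δ) (ht : 0 < t) {R : Set X} (hR : R.Finite)
    (hRne : R.Nonempty) :
    ∃ Q ⊆ R, Q.Nonempty ∧ IsKatzTao δ t 1 Q ∧
      ∀ p ∈ R, p ∉ Q → ¬ IsKatzTao δ t 1 (insert p Q) := by
  classical
  set 𝒜 : Set (Set X) := {Q | Q ⊆ R ∧ IsKatzTao δ t 1 Q} with h𝒜
  have h𝒜fin : 𝒜.Finite := hR.finite_subsets.subset (fun Q hQ => hQ.1)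
  obtain ⟨p, hp⟩ := hRne
  have hsing : ({p} : Set X) ∈ 𝒜 :=
    ⟨singleton_subset_iff.2 hp, KT.isKatzTao_singleton hδ ht p⟩
  obtain ⟨Q, hQ𝒜, hQmax⟩ := Set.Finite.exists_maximalFor (fun Q => Q.ncard) 𝒜 h𝒜fin ⟨_, hsing⟩
  refine ⟨Q, hQ𝒜.1, ?_, hQ𝒜.2, ?_⟩
  · rcases Q.eq_empty_or_nonempty with rfl | h
    · exfalso
      have := hQmax hsing (by simp [Set.ncard_singleton])
      simp [Set.ncard_singleton] at this
    · exact h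
  · intro q hq hqQ hKT
    have hmem : insert q Q ∈ 𝒜 := ⟨insert_subset hq hQ𝒜.1, hKT⟩
    have hQfin : Q.Finite := hR.subset hQ𝒜.1
    have hcard : (insert q Q).ncard = Q.ncard + 1 := Set.ncard_insert_of_notMem hqQ hQfin
    have := hQmax hmem (by dsimp only; rw [hcard]; omega)
    dsimp only at this; omega

lemma KT.peeling {δ t : ℝ} (hδ : 0 < δ) (ht : 0 < t) :
    ∀ (n : ℕ) (R : Set X), R.Finite → R.ncard ≤ n →
    ∃ (N : ℕ) (parts : Fin N → Set X),
      (⋃ j, parts j) = R ∧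
      Pairwise (onFun Disjoint parts) ∧
      (∀ j, IsKatzTao δ t 1 (parts j)) ∧
      (∀ j, (parts j).Nonempty) ∧
      (R = ∅ ∨ ∃ p ∈ R, ∀ j, p ∈ parts j ∨ ¬ IsKatzTao δ t 1 (insert p (parts j))) := by
  intro n
  induction n with
  | zero =>
    intro R hfin hcard
    have : R = ∅ := Set.ncard_eq_zero hfin |>.1 (Nat.le_zero.1 hcard)
    subst this
    exact ⟨0, Fin.elim0, by simp, by intro i; exact i.elim0, fun j => j.elim0, fun j => j.elim0,
      Or.inl rfl⟩
  | succ n ih =>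
    intro R hfin hcard
    rcases R.eq_empty_or_nonempty with rfl | hne
    · exact ⟨0, Fin.elim0, by simp, by intro i; exact i.elim0, fun j => j.elim0, fun j => j.elim0,
        Or.inl rfl⟩
    obtain ⟨Q, hQR, hQne, hQKT, hQmax⟩ := KT.exists_maximal_KT hδ ht hfin hne
    have hR'fin : (R \ Q).Finite := hfin.subset diff_subset
    have hR'card : (R \ Q).ncard ≤ n := by
      have h1 : (R \ Q).ncard < R.ncard := by
        apply Set.ncard_lt_ncard _ hfin
        rw [Set.ssubset_iff_of_subset diff_subset]
        obtain ⟨q, hq⟩ := hQne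
        exact ⟨q, hQR hq, fun h => h.2 hq⟩
      omega
    obtain ⟨N', parts', hunion, hdisj, hKT, hne', hwit⟩ := ih (R \ Q) hR'fin hR'card
    refine ⟨N' + 1, Fin.cons Q parts', ?_, ?_, ?_, ?_, ?_⟩
    · ext x
      simp only [mem_iUnion]
      rw [Fin.exists_fin_succ]
      simp only [Fin.cons_zero, Fin.cons_succ]
      constructor
      · rintro (h | ⟨i, hi⟩)
        · exact hQR h
        · have : x ∈ ⋃ j, parts' j := mem_iUnion.2 ⟨i, hi⟩
          rw [hunion] at this; exact this.1
      · intro hx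
        by_cases hxQ : x ∈ Q
        · exact Or.inl hxQ
        · have : x ∈ ⋃ j, parts' j := by rw [hunion]; exact ⟨hx, hxQ⟩
          obtain ⟨i, hi⟩ := mem_iUnion.1 this
          exact Or.inr ⟨i, hi⟩
    · intro i j hij
      have hQdisj : ∀ i : Fin N', Disjoint Q (parts' i) := by
        intro i
        have hsub : parts' i ⊆ R \ Q := by
          rw [← hunion]; exact subset_iUnion _ i
        exact Set.disjoint_of_subset_right hsub disjoint_sdiff_right
      obtain rfl | ⟨i', rfl⟩ := i.eq_zero_or_eq_succ <;>
        obtain rfl | ⟨j', rfl⟩ := j.eq_zero_or_eq_succ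
      · exact absurd rfl hij
      · simpa only [onFun, Fin.cons_zero, Fin.cons_succ] using hQdisj j'
      · simpa only [onFun, Fin.cons_zero, Fin.cons_succ] using (hQdisj i').symm
      · simp only [onFun, Fin.cons_succ]
        exact hdisj (fun h => hij (by rw [h]))
    · intro j
      refine Fin.cases ?_ ?_ j
      · simpa using hQKT
      · intro i; simpa using hKT i
    · intro j
      refine Fin.cases ?_ ?_ j
      · simpa using hQne
      · intro i; simpa using hne' i
    · right
      rcases hwit with hR' | ⟨p, hpR', hp⟩
      · obtain ⟨p, hp⟩ := hQne
        refine ⟨p, hQR hp, ?_⟩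
        intro j
        refine Fin.cases ?_ ?_ j
        · exact Or.inl (by simpa using hp)
        · intro i
          exfalso
          obtain ⟨x, hx⟩ := hne' i
          have : x ∈ ⋃ j, parts' j := mem_iUnion.2 ⟨i, hx⟩
          rw [hunion, hR'] at this
          exact this
      · refine ⟨p, hpR'.1, ?_⟩
        intro j
        refine Fin.cases ?_ ?_ j
        · right
          simpa using hQmax p hpR'.1 hpR'.2
        · intro i
          simpa using hp i

lemma KT.obstruction {δ t : ℝ} (hδ : 0 < δ) (hδ2 : δ ≤ 2) (ht : 0 < t) {Q : Set X}
    (hQKT : IsKatzTao δ t 1 Q) (hQfin : Q.Finite) {p x₀ : X} (hp : p ∈ closedBall x₀ 1)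
    (hQb : Q ⊆ closedBall x₀ 1) (hfail : ¬ IsKatzTao δ t 1 (insert p Q)) :
    ∃ r, δ ≤ r ∧ r ≤ 2 ∧ (r / δ) ^ t ≤ 2 * ((Q ∩ closedBall p (2 * r)).ncard : ℝ) := by
  have finish : ∀ r : ℝ, δ ≤ r → r ≤ 2 → 1 ≤ ((Q ∩ closedBall p (2 * r)).ncard : ℝ) →
      (r / δ) ^ t ≤ ((Q ∩ closedBall p (2 * r)).ncard : ℝ) + 1 →
      (r / δ) ^ t ≤ 2 * ((Q ∩ closedBall p (2 * r)).ncard : ℝ) := by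
    intro r _ _ h1 h2; linarith
  rw [IsKatzTao, not_and_or] at hfail
  rcases hfail with hsep | hcard
  · rw [IsSep] at hsep
    push_neg at hsep
    obtain ⟨a, ha, b, hb, hab, hd⟩ := hsep
    have key : ∃ q ∈ Q, dist p q < δ := by
      rcases ha with rfl | haQ
      · rcases hb with rfl | hbQ
        · exact absurd rfl hab
        · exact ⟨b, hbQ, hd⟩
      · rcases hb with rfl | hbQ
        · exact ⟨a, haQ, by rwa [dist_comm]⟩
        · exact absurd (hQKT.1 a haQ b hbQ hab) (not_le.2 hd)
    obtain ⟨q, hqQ, hq⟩ := key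
    refine ⟨δ, le_refl δ, hδ2, ?_⟩
    have hmem : q ∈ Q ∩ closedBall p (2 * δ) := ⟨hqQ, by
      rw [mem_closedBall, dist_comm]; linarith⟩
    have hpos : 1 ≤ ((Q ∩ closedBall p (2 * δ)).ncard : ℝ) := by
      have h0 : 0 < (Q ∩ closedBall p (2 * δ)).ncard :=
        (Set.ncard_pos (hQfin.inter_of_left _)).2 ⟨q, hmem⟩
      exact_mod_cast h0
    have : (δ / δ) ^ t = 1 := by
      rw [div_self hδ.ne', Real.one_rpow]
    rw [this]; linarith
  · push_neg at hcard
    obtain ⟨x, r, hr, hbig⟩ := hcard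
    rw [one_mul] at hbig
    have hrpos : 0 < r := hδ.trans_le hr
    have hpx : p ∈ closedBall x r := by
      by_contra hpx
      have heq : (insert p Q) ∩ closedBall x r = Q ∩ closedBall x r := by
        ext y
        simp only [mem_inter_iff, mem_insert_iff]
        constructor
        · rintro ⟨rfl | hy, hy2⟩
          · exact absurd hy2 hpx
          · exact ⟨hy, hy2⟩
        · exact fun ⟨h1, h2⟩ => ⟨Or.inr h1, h2⟩
      rw [heq] at hbig
      have hKT := hQKT.2 x r hr
      rw [one_mul] at hKT
      exact absurd hKT (not_le.2 hbig)
    have hins : ((insert p Q ∩ closedBall x r : Set X).ncard : ℝ)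
        ≤ ((Q ∩ closedBall x r).ncard : ℝ) + 1 := by
      have hsub : (insert p Q) ∩ closedBall x r ⊆ insert p (Q ∩ closedBall x r) := by
        rintro y ⟨rfl | hy, hy2⟩
        · exact Or.inl rfl
        · exact Or.inr ⟨hy, hy2⟩
      have h1 := Set.ncard_le_ncard hsub ((hQfin.inter_of_left _).insert p)
      have h2 := Set.ncard_insert_le p (Q ∩ closedBall x r)
      exact_mod_cast h1.trans h2
    rw [Nat.card_coe_set_eq] at hbig
    have hQx : (r / δ) ^ t - 1 < ((Q ∩ closedBall x r).ncard : ℝ) := by linarith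
    have hball : Q ∩ closedBall x r ⊆ Q ∩ closedBall p (2 * r) := by
      rintro y ⟨hy, hy2⟩
      refine ⟨hy, ?_⟩
      rw [mem_closedBall] at *
      calc dist y p ≤ dist y x + dist x p := dist_triangle y x p
        _ ≤ r + r := add_le_add hy2 (by rwa [dist_comm] at hpx)
        _ = 2 * r := by ring
    set r' := min r 2 with hr'
    have hδr' : δ ≤ r' := le_min hr hδ2
    have hr'2 : r' ≤ 2 := min_le_right _ _
    have hr'r : r' ≤ r := min_le_left _ _
    have hQr' : Q ∩ closedBall x r ⊆ Q ∩ closedBall p (2 * r') := by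
      rcases le_total r 2 with h2 | h2
      · rw [hr', min_eq_left h2]; exact hball
      · rw [hr', min_eq_right h2]
        rintro y ⟨hy, _⟩
        refine ⟨hy, ?_⟩
        rw [mem_closedBall]
        calc dist y p ≤ dist y x₀ + dist x₀ p := dist_triangle y x₀ p
          _ ≤ 1 + 1 := add_le_add (hQb hy) (by rw [dist_comm]; exact hp)
          _ ≤ 2 * 2 := by norm_num
    have hcard' : ((Q ∩ closedBall x r).ncard : ℝ)
        ≤ ((Q ∩ closedBall p (2 * r')).ncard : ℝ) := by
      exact_mod_cast Set.ncard_le_ncard hQr' (hQfin.inter_of_left _)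
    have hmono : (r' / δ) ^ t ≤ (r / δ) ^ t :=
      Real.rpow_le_rpow (by positivity) (by gcongr) ht.le
    have hone : (1 : ℝ) ≤ (r / δ) ^ t :=
      Real.one_le_rpow (by rw [le_div_iff₀ hδ]; linarith) ht.le
    have h0 : (0 : ℝ) < ((Q ∩ closedBall x r).ncard : ℝ) := by linarith
    have h0' : 0 < (Q ∩ closedBall x r).ncard := by exact_mod_cast h0
    have h1 : (1 : ℝ) ≤ ((Q ∩ closedBall x r).ncard : ℝ) := by exact_mod_cast h0'
    exact ⟨r', hδr', hr'2, finish r' hδr' hr'2 (by linarith) (by linarith)⟩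

lemma KT.dyadic_select {δ t : ℝ} (hδ : 0 < δ) (ht : 0 < t) {Q : Set X} {p : X} {r : ℝ}
    (hQfin : Q.Finite) (hr1 : δ ≤ r) (hr2 : r ≤ 2)
    (h : (r / δ) ^ t ≤ 2 * ((Q ∩ closedBall p (2 * r)).ncard : ℝ)) :
    ∃ k : ℕ, k ≤ ⌈Real.logb 2 (2 / δ)⌉₊ ∧
      ((2 : ℝ) ^ (k : ℝ)) ^ t
        ≤ 2 ^ (t + 1) * ((Q ∩ closedBall p (2 ^ ((k : ℝ) + 1) * δ)).ncard : ℝ) := by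
  set x := r / δ with hxdef
  have hx1 : (1 : ℝ) ≤ x := (one_le_div hδ).2 hr1
  have hxpos : (0 : ℝ) < x := lt_of_lt_of_le one_pos hx1
  set k := ⌈Real.logb 2 x⌉₊ with hkdef
  have hlog0 : 0 ≤ Real.logb 2 x := Real.logb_nonneg one_lt_two hx1
  refine ⟨k, ?_, ?_⟩
  · apply Nat.ceil_le_ceil
    apply Real.logb_le_logb_of_le one_lt_two hxpos
    rw [hxdef]
    gcongr
  · have hxk : x ≤ (2 : ℝ) ^ (k : ℝ) := by
      conv_lhs => rw [← Real.rpow_logb two_pos (by norm_num) hxpos]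
      exact Real.rpow_le_rpow_of_exponent_le one_le_two (Nat.le_ceil _)
    have hk2x : (2 : ℝ) ^ (k : ℝ) ≤ 2 * x := by
      have hlt : (k : ℝ) < Real.logb 2 x + 1 := by
        have := Nat.ceil_lt_add_one hlog0
        exact_mod_cast this
      calc (2 : ℝ) ^ (k : ℝ) ≤ 2 ^ (Real.logb 2 x + 1) :=
            Real.rpow_le_rpow_of_exponent_le one_le_two hlt.le
        _ = 2 ^ (Real.logb 2 x) * 2 := by rw [Real.rpow_add two_pos, Real.rpow_one]
        _ = 2 * x := by rw [Real.rpow_logb two_pos (by norm_num) hxpos]; ring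
    have hball : Q ∩ closedBall p (2 * r) ⊆ Q ∩ closedBall p (2 ^ ((k : ℝ) + 1) * δ) := by
      apply inter_subset_inter_right
      apply closedBall_subset_closedBall
      have hrx : r = x * δ := by rw [hxdef]; field_simp
      rw [hrx, Real.rpow_add two_pos, Real.rpow_one]
      calc 2 * (x * δ) = (2 * x) * δ := by ring
        _ ≤ ((2:ℝ) ^ (k:ℝ) * 2) * δ := by
            have h2x : 2 * x ≤ (2:ℝ)^(k:ℝ) * 2 := by
              have := mul_le_mul_of_nonneg_left hxk (by norm_num : (0:ℝ) ≤ 2)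
              linarith
            exact mul_le_mul_of_nonneg_right h2x hδ.le
        _ = (2:ℝ) ^ (k:ℝ) * 2 * δ := rfl
    have hcardm : ((Q ∩ closedBall p (2 * r)).ncard : ℝ)
        ≤ ((Q ∩ closedBall p (2 ^ ((k : ℝ) + 1) * δ)).ncard : ℝ) := by
      exact_mod_cast Set.ncard_le_ncard hball (hQfin.inter_of_left _)
    calc ((2 : ℝ) ^ (k : ℝ)) ^ t ≤ (2 * x) ^ t :=
          Real.rpow_le_rpow (Real.rpow_nonneg two_pos.le _) hk2x ht.le
      _ = 2 ^ t * x ^ t := Real.mul_rpow two_pos.le hxpos.le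
      _ ≤ 2 ^ t * (2 * ((Q ∩ closedBall p (2 * r)).ncard : ℝ)) := by
          apply mul_le_mul_of_nonneg_left _ (Real.rpow_nonneg two_pos.le t)
          exact h
      _ ≤ 2 ^ t * (2 * ((Q ∩ closedBall p (2 ^ ((k : ℝ) + 1) * δ)).ncard : ℝ)) := by
          apply mul_le_mul_of_nonneg_left _ (Real.rpow_nonneg two_pos.le t)
          linarith
      _ = 2 ^ (t + 1) * ((Q ∩ closedBall p (2 ^ ((k : ℝ) + 1) * δ)).ncard : ℝ) := by
          rw [Real.rpow_add two_pos t 1, Real.rpow_one]; ring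

lemma KT.sum_ncard_le_ncard {Y ι : Type*} {B : Set Y} (hB : B.Finite) :
    ∀ (T : Finset ι) (f : ι → Set Y), (∀ j ∈ T, f j ⊆ B) →
    (∀ i ∈ T, ∀ j ∈ T, i ≠ j → Disjoint (f i) (f j)) →
    ∑ j ∈ T, (f j).ncard ≤ B.ncard := by
  classical
  intro T
  induction T using Finset.induction_on generalizing B with
  | empty => intro f _ _; simp
  | @insert a T ha ih =>
    intro f hf hdisj
    rw [Finset.sum_insert ha]
    have hfa : f a ⊆ B := hf a (Finset.mem_insert_self a T)
    have hrest : ∑ j ∈ T, (f j).ncard ≤ (B \ f a).ncard := by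
      apply ih (hB.subset diff_subset)
      · intro j hj
        have hdja : Disjoint (f a) (f j) :=
          hdisj a (Finset.mem_insert_self a T) j (Finset.mem_insert_of_mem hj)
            (fun h => ha (h ▸ hj))
        intro y hy
        exact ⟨hf j (Finset.mem_insert_of_mem hj) hy, fun hya => hdja.ne_of_mem hya hy rfl⟩
      · intro i hi j hj hij
        exact hdisj i (Finset.mem_insert_of_mem hi) j (Finset.mem_insert_of_mem hj) hij
    have hdiff : (B \ f a).ncard = B.ncard - (f a).ncard :=
      Set.ncard_diff hfa (hB.subset hfa)
    have hle : (f a).ncard ≤ B.ncard := Set.ncard_le_ncard hfa hB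
    omega

lemma KT.choose_delta0 (A ε : ℝ) (hA : 1 ≤ A) (hε : 0 < ε) :
    ∃ δ₀ : ℝ, 0 < δ₀ ∧ δ₀ ≤ 1 ∧ ∀ δ : ℝ, 0 < δ → δ ≤ δ₀ →
      ((⌈Real.logb 2 (2 / δ)⌉₊ : ℝ) + 2) * A ≤ δ ^ (-ε) := by
  have htend : Tendsto (fun δ : ℝ => (4 - 2 * Real.log δ) * A * δ ^ ε) (𝓝[>] 0) (𝓝 0) := by
    have h1 : Tendsto (fun δ : ℝ => Real.log δ * δ ^ ε) (𝓝[>] 0) (𝓝 0) :=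
      tendsto_log_mul_rpow_nhdsGT_zero hε
    have h2 : Tendsto (fun δ : ℝ => δ ^ ε) (𝓝[>] 0) (𝓝 0) := by
      have hc := (Real.continuousAt_rpow_const 0 ε (Or.inr hε.le)).continuousWithinAt
        (s := Set.Ioi (0:ℝ))
      have ht' := hc.tendsto
      rw [show ((0:ℝ) ^ ε) = 0 from Real.zero_rpow hε.ne'] at ht'
      exact ht'
    have : Tendsto (fun δ : ℝ => (4 * A) * δ ^ ε - (2 * A) * (Real.log δ * δ ^ ε))
        (𝓝[>] 0) (𝓝 ((4 * A) * 0 - (2 * A) * 0)) :=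
      ((h2.const_mul _).sub (h1.const_mul _))
    simp only [mul_zero, sub_zero] at this
    convert this using 2 with δ
    ring
  have hev : ∀ᶠ δ in 𝓝[>] (0:ℝ), (4 - 2 * Real.log δ) * A * δ ^ ε ≤ 1 :=
    htend.eventually (eventually_le_nhds (by norm_num : (0:ℝ) < 1))
  rw [eventually_iff, mem_nhdsGT_iff_exists_Ioc_subset] at hev
  obtain ⟨u, hu, hsub⟩ := hev
  refine ⟨min u 1, lt_min hu one_pos, min_le_right _ _, ?_⟩
  intro δ hδ hδle
  have hδu : δ ∈ Ioc (0:ℝ) u := ⟨hδ, hδle.trans (min_le_left _ _)⟩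
  have hδ1 : δ ≤ 1 := hδle.trans (min_le_right _ _)
  have hkey : (4 - 2 * Real.log δ) * A * δ ^ ε ≤ 1 := hsub hδu
  have hlogδ : Real.log δ ≤ 0 := Real.log_nonpos hδ.le hδ1
  have hK : (⌈Real.logb 2 (2 / δ)⌉₊ : ℝ) + 2 ≤ 4 - 2 * Real.log δ := by
    have hlb : Real.logb 2 (2 / δ) = 1 - Real.log δ / Real.log 2 := by
      rw [Real.logb, Real.log_div (by norm_num) hδ.ne']
      field_simp
    have hl2 : (1:ℝ)/2 ≤ Real.log 2 := by
      have := Real.log_two_gt_d9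
      linarith
    have hl2' : 0 < Real.log 2 := by linarith
    have h3 : -(Real.log δ) / Real.log 2 ≤ -2 * Real.log δ := by
      rw [div_le_iff₀ hl2']
      nlinarith
    have hlbnn : 0 ≤ Real.logb 2 (2 / δ) := by
      apply Real.logb_nonneg one_lt_two
      rw [le_div_iff₀ hδ]; linarith
    have hceil : (⌈Real.logb 2 (2 / δ)⌉₊ : ℝ) < Real.logb 2 (2 / δ) + 1 :=
      Nat.ceil_lt_add_one hlbnn
    have : Real.logb 2 (2 / δ) ≤ 1 - 2 * Real.log δ := by
      rw [hlb]
      have heq : Real.log δ / Real.log 2 = -((-Real.log δ) / Real.log 2) := by ring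
      rw [heq]
      linarith
    linarith
  have hδεpos : (0:ℝ) < δ ^ ε := Real.rpow_pos_of_pos hδ ε
  have h4 : 0 < 4 - 2 * Real.log δ := by linarith
  have hApos : 0 < A := by linarith
  calc ((⌈Real.logb 2 (2 / δ)⌉₊ : ℝ) + 2) * A ≤ (4 - 2 * Real.log δ) * A :=
        mul_le_mul_of_nonneg_right hK hApos.le
    _ ≤ δ ^ (-ε) := by
        rw [Real.rpow_neg hδ.le, ← one_div]
        exact (le_div_iff₀ hδεpos).2 (by linarith)

end Aux

/-- **Partition of a `(δ,t)`-set into Katz–Tao `(δ,t,1)`-sets** (Lemma 3.2 of the paper).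
In a doubling metric space, every `δ`-separated `(δ,t,C)`-set `P` in a unit ball can be
partitioned into `N ≤ C·|P|·δ^{t-ε}` Katz–Tao `(δ,t,1)`-sets, for `δ` small enough. -/
theorem partition_into_KatzTao (D : ℕ) (hD : 1 ≤ D) (ε t : ℝ) (hε : 0 < ε) (ht : 0 < t) :
    ∃ δ₀ : ℝ, 0 < δ₀ ∧ ∀ δ : ℝ, 0 < δ → δ ≤ δ₀ →
      ∀ (X : Type) [MetricSpace X], IsDoubling X D →
      ∀ (x₀ : X) (C : ℝ) (P : Set X), 0 < C → P ⊆ closedBall x₀ 1 → IsSep δ P →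
        IsDeltaSet δ t C P →
        ∃ (N : ℕ) (parts : Fin N → Set X),
          (N : ℝ) ≤ C * (Nat.card P : ℝ) * δ ^ (t - ε) ∧
          (⋃ j, parts j) = P ∧
          Pairwise (Function.onFun Disjoint parts) ∧
          ∀ j, IsKatzTao δ t 1 (parts j) := by
  classical
  set A : ℝ := 2 ^ (2 * t + 1) * (D : ℝ) ^ 2 with hAdef
  have hD1 : (1 : ℝ) ≤ (D : ℝ) := by exact_mod_cast hD
  have h2t1 : (1 : ℝ) ≤ 2 ^ (2 * t + 1) := Real.one_le_rpow one_le_two (by linarith)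
  have hA : 1 ≤ A := by
    have : (1:ℝ) ≤ (D:ℝ)^2 := one_le_pow₀ hD1
    nlinarith
  obtain ⟨δ₀, hδ₀pos, hδ₀1, hδ₀⟩ := KT.choose_delta0 A ε hA hε
  refine ⟨δ₀, hδ₀pos, ?_⟩
  intro δ hδ hδle X _ hX x₀ C P hC hPb hPsep hPds
  have hδ1 : δ ≤ 1 := hδle.trans hδ₀1
  have hδ2 : δ ≤ 2 := by linarith
  -- P is finite
  obtain ⟨n, hn⟩ : ∃ n : ℕ, (2:ℝ)/δ < 2 ^ n := pow_unbounded_of_one_lt _ one_lt_two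
  have hPfin : P.Finite := by
    refine (KT.sep_card_le hX hPsep hPb one_pos (n := n) ?_).1
    rw [div_lt_iff₀ hδ] at hn
    have h2n : (0:ℝ) < 2 ^ n := by positivity
    rw [show (2:ℝ) * (1 / 2 ^ n) = 2 / 2 ^ n by ring, div_lt_iff₀ h2n]
    linarith [mul_comm δ ((2:ℝ)^n)]
  rcases P.eq_empty_or_nonempty with rfl | hPne
  · refine ⟨0, Fin.elim0, ?_, by simp, ?_, fun j => j.elim0⟩
    · have : (Nat.card (↥(∅ : Set X)) : ℝ) = 0 := by simp
      rw [this]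
      simp
    · intro i j hij; exact i.elim0
  obtain ⟨N, parts, hunion, hdisj, hKT, hneJ, hwit⟩ :=
    KT.peeling hδ ht P.ncard P hPfin le_rfl
  rcases hwit with h | ⟨p, hpP, hp⟩
  · exact absurd h hPne.ne_empty
  refine ⟨N, parts, ?_, hunion, hdisj, hKT⟩
  -- only the numeric bound remains
  set K := ⌈Real.logb 2 (2 / δ)⌉₊ with hKdef
  have hpartssub : ∀ j, parts j ⊆ P := by
    intro j
    rw [← hunion]
    exact subset_iUnion _ j
  have hpartfin : ∀ j, (parts j).Finite := fun j => hPfin.subset (hpartssub j)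
  have H : ∀ j : Fin N, ∃ k : ℕ, p ∉ parts j →
      (k ≤ K ∧ ((2:ℝ) ^ (k:ℝ)) ^ t
        ≤ 2 ^ (t+1) * (((parts j) ∩ closedBall p (2 ^ ((k:ℝ)+1) * δ)).ncard : ℝ)) := by
    intro j
    by_cases hpj : p ∈ parts j
    · exact ⟨0, fun h => absurd hpj h⟩
    · have hfail : ¬ IsKatzTao δ t 1 (insert p (parts j)) := (hp j).resolve_left hpj
      obtain ⟨r, hr1, hr2, hr3⟩ := KT.obstruction hδ hδ2 ht (hKT j) (hpartfin j)
        (hPb hpP) ((hpartssub j).trans hPb) hfail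
      obtain ⟨k, hk, hineq⟩ := KT.dyadic_select hδ ht (hpartfin j) hr1 hr2 hr3
      exact ⟨k, fun _ => ⟨hk, hineq⟩⟩
  choose kf hkf using H
  set s : Finset (Fin N) := Finset.univ.filter (fun j => p ∉ parts j) with hs
  -- at most one part contains p
  have hNs : N ≤ s.card + 1 := by
    have h1 : (Finset.univ.filter (fun j : Fin N => p ∈ parts j)).card ≤ 1 := by
      apply Finset.card_le_one.2
      intro a ha b hb
      simp only [Finset.mem_filter] at ha hb
      by_contra hab
      exact (Set.disjoint_left.1 (hdisj hab)) ha.2 hb.2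
    have hcov : (Finset.univ : Finset (Fin N))
        ⊆ s ∪ Finset.univ.filter (fun j : Fin N => p ∈ parts j) := by
      intro j _
      by_cases hpj : p ∈ parts j
      · exact Finset.mem_union_right _ (Finset.mem_filter.2 ⟨Finset.mem_univ j, hpj⟩)
      · exact Finset.mem_union_left _ (by rw [hs]; exact Finset.mem_filter.2 ⟨Finset.mem_univ j, hpj⟩)
    have h2 : N ≤ s.card + (Finset.univ.filter (fun j : Fin N => p ∈ parts j)).card := by
      calc N = (Finset.univ : Finset (Fin N)).card := by rw [Finset.card_univ, Fintype.card_fin]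
        _ ≤ (s ∪ Finset.univ.filter (fun j : Fin N => p ∈ parts j)).card :=
            Finset.card_le_card hcov
        _ ≤ _ := Finset.card_union_le _ _
    omega
  -- fiberwise decomposition along scales
  have hfib : s.card = ∑ k ∈ Finset.range (K+1), (s.filter (fun j => kf j = k)).card := by
    apply Finset.card_eq_sum_card_fiberwise
    intro j hj
    simp only [Finset.coe_range, Set.mem_Iio, Finset.mem_coe] at hj ⊢
    have hjs : p ∉ parts j := by
      rw [hs] at hj
      simpa using (Finset.mem_filter.1 hj).2
    have := (hkf j hjs).1
    omega
  set cardP : ℝ := (P.ncard : ℝ) with hcardP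
  set M : ℝ := A * (C * δ ^ t * cardP) with hM
  -- key facts
  have hcovP : (covNum δ P : ℝ) ≤ cardP := by
    have h := KT.covNum_le_card hδ.le hPfin
    rw [Nat.card_coe_set_eq] at h
    rw [hcardP]
    exact_mod_cast h
  have hCpos : 0 ≤ C * δ ^ t * cardP := by
    have : (0:ℝ) ≤ δ ^ t := Real.rpow_nonneg hδ.le t
    positivity
  have h1M : (1:ℝ) ≤ C * δ ^ t * cardP := by
    have hmem : p ∈ P ∩ closedBall p δ := ⟨hpP, mem_closedBall_self hδ.le⟩
    have h1 : 1 ≤ covNum δ (P ∩ closedBall p δ) :=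
      KT.one_le_covNum ⟨p, hmem⟩ (hPfin.inter_of_left _) hδ.le
    have h2 := hPds p δ le_rfl
    have h3 : (1:ℝ) ≤ C * δ ^ t * (covNum δ P : ℝ) := by
      have : (1:ℝ) ≤ (covNum δ (P ∩ closedBall p δ) : ℝ) := by exact_mod_cast h1
      linarith
    have hδt : (0:ℝ) ≤ δ ^ t := Real.rpow_nonneg hδ.le t
    have h4 : C * δ ^ t * (covNum δ P : ℝ) ≤ C * δ ^ t * cardP :=
      mul_le_mul_of_nonneg_left hcovP (by positivity)
    linarith
  -- per-fiber bound
  have hfibbound : ∀ k ∈ Finset.range (K+1),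
      ((s.filter (fun j => kf j = k)).card : ℝ) ≤ M := by
    intro k _
    set T := s.filter (fun j => kf j = k) with hT
    set Bk : Set X := closedBall p (2 ^ ((k:ℝ)+1) * δ) with hBk
    have hTmem : ∀ j ∈ T, p ∉ parts j ∧ kf j = k := by
      intro j hj
      rw [hT, Finset.mem_filter] at hj
      have hj1 := hj.1
      rw [hs, Finset.mem_filter] at hj1
      exact ⟨hj1.2, hj.2⟩
    -- step 1: per-part lower bound
    have hstep1 : ∀ j ∈ T, ((2:ℝ) ^ (k:ℝ)) ^ t
        ≤ 2 ^ (t+1) * ((parts j ∩ Bk).ncard : ℝ) := by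
      intro j hj
      obtain ⟨hpj, hkj⟩ := hTmem j hj
      have := (hkf j hpj).2
      rw [hkj] at this
      exact this
    -- step 2: disjointness sum
    have hstep2 : ∑ j ∈ T, (parts j ∩ Bk).ncard ≤ (P ∩ Bk).ncard := by
      apply KT.sum_ncard_le_ncard (hPfin.inter_of_left _)
      · intro j _
        exact inter_subset_inter_left _ (hpartssub j)
      · intro i _ j _ hij
        exact Set.disjoint_of_subset (inter_subset_left) (inter_subset_left) (hdisj hij)
    -- step 3: delta-set bound
    have hrk : δ ≤ 2 ^ ((k:ℝ)+1) * δ := by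
      have h1 : (1:ℝ) ≤ 2 ^ ((k:ℝ)+1) := Real.one_le_rpow one_le_two (by positivity)
      nlinarith
    have hstep3 : ((P ∩ Bk).ncard : ℝ)
        ≤ (D:ℝ) ^ 2 * (C * (2 ^ ((k:ℝ)+1) * δ) ^ t * (covNum δ P : ℝ)) := by
      have hsep' : IsSep δ (P ∩ Bk) := fun a ha b hb hab => hPsep a ha.1 b hb.1 hab
      have ha := KT.card_le_covNum hX hδ hsep' (hPfin.inter_of_left _)
      rw [Nat.card_coe_set_eq] at ha
      have ha' : ((P ∩ Bk).ncard : ℝ) ≤ (D:ℝ)^2 * (covNum δ (P ∩ Bk) : ℝ) := by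
        exact_mod_cast ha
      have hb := hPds p (2 ^ ((k:ℝ)+1) * δ) hrk
      have hDnn : (0:ℝ) ≤ (D:ℝ)^2 := by positivity
      calc ((P ∩ Bk).ncard : ℝ) ≤ (D:ℝ)^2 * (covNum δ (P ∩ Bk) : ℝ) := ha'
        _ ≤ (D:ℝ)^2 * (C * (2 ^ ((k:ℝ)+1) * δ) ^ t * (covNum δ P : ℝ)) :=
            mul_le_mul_of_nonneg_left hb hDnn
    -- combine: T.card * 2^(kt) ≤ 2^(t+1) * D^2 * C * (2^(k+1) δ)^t * covNum P
    have hTsum : (T.card : ℝ) * ((2:ℝ) ^ (k:ℝ)) ^ t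
        ≤ 2 ^ (t+1) * (((P ∩ Bk).ncard : ℝ)) := by
      have h1 : (T.card : ℝ) * ((2:ℝ) ^ (k:ℝ)) ^ t = ∑ j ∈ T, ((2:ℝ) ^ (k:ℝ)) ^ t := by
        rw [Finset.sum_const, nsmul_eq_mul]
      rw [h1]
      calc ∑ j ∈ T, ((2:ℝ) ^ (k:ℝ)) ^ t
          ≤ ∑ j ∈ T, 2 ^ (t+1) * ((parts j ∩ Bk).ncard : ℝ) := Finset.sum_le_sum hstep1
        _ = 2 ^ (t+1) * ∑ j ∈ T, ((parts j ∩ Bk).ncard : ℝ) := by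
            rw [Finset.mul_sum]
        _ ≤ 2 ^ (t+1) * (((P ∩ Bk).ncard : ℝ)) := by
            apply mul_le_mul_of_nonneg_left _ (Real.rpow_nonneg two_pos.le _)
            have : (∑ j ∈ T, ((parts j ∩ Bk).ncard : ℝ)) = ((∑ j ∈ T, (parts j ∩ Bk).ncard : ℕ) : ℝ) := by
              push_cast; ring
            rw [this]
            exact_mod_cast hstep2
    -- rpow algebra
    have hrpalg : (2:ℝ) ^ (t+1) * ((D:ℝ)^2 * (C * (2 ^ ((k:ℝ)+1) * δ) ^ t * (covNum δ P : ℝ)))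
        ≤ ((2:ℝ) ^ (k:ℝ)) ^ t * M := by
      have hsplit : ((2:ℝ) ^ ((k:ℝ)+1) * δ) ^ t = (2:ℝ) ^ (((k:ℝ)+1)*t) * δ ^ t := by
        rw [Real.mul_rpow (by positivity) hδ.le, ← Real.rpow_mul two_pos.le]
      have hpow : ((2:ℝ) ^ (k:ℝ)) ^ t = (2:ℝ) ^ ((k:ℝ)*t) := by
        rw [← Real.rpow_mul two_pos.le]
      have hexp : (2:ℝ) ^ (t+1) * (2:ℝ) ^ (((k:ℝ)+1)*t) = (2:ℝ) ^ ((k:ℝ)*t) * (2:ℝ) ^ (2*t+1) := by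
        rw [← Real.rpow_add two_pos, ← Real.rpow_add two_pos]
        ring_nf
      calc (2:ℝ) ^ (t+1) * ((D:ℝ)^2 * (C * ((2:ℝ) ^ ((k:ℝ)+1) * δ) ^ t * (covNum δ P : ℝ)))
          = ((2:ℝ) ^ (t+1) * (2:ℝ) ^ (((k:ℝ)+1)*t)) * ((D:ℝ)^2 * (C * δ ^ t * (covNum δ P : ℝ))) := by
            rw [hsplit]; ring
        _ = ((2:ℝ) ^ ((k:ℝ)*t) * (2:ℝ) ^ (2*t+1)) * ((D:ℝ)^2 * (C * δ ^ t * (covNum δ P : ℝ))) := by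
            rw [hexp]
        _ ≤ ((2:ℝ) ^ ((k:ℝ)*t) * (2:ℝ) ^ (2*t+1)) * ((D:ℝ)^2 * (C * δ ^ t * cardP)) := by
            have hδt : (0:ℝ) ≤ δ ^ t := Real.rpow_nonneg hδ.le t
            have h4 : C * δ ^ t * (covNum δ P : ℝ) ≤ C * δ ^ t * cardP :=
              mul_le_mul_of_nonneg_left hcovP (by positivity)
            have h5 : (D:ℝ)^2 * (C * δ ^ t * (covNum δ P : ℝ)) ≤ (D:ℝ)^2 * (C * δ ^ t * cardP) :=
              mul_le_mul_of_nonneg_left h4 (by positivity)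
            have h6 : (0:ℝ) ≤ (2:ℝ) ^ ((k:ℝ)*t) * (2:ℝ) ^ (2*t+1) := by positivity
            exact mul_le_mul_of_nonneg_left h5 h6
        _ = ((2:ℝ) ^ (k:ℝ)) ^ t * M := by
            rw [hpow, hM, hAdef]; ring
    have h2kt : (0:ℝ) < ((2:ℝ) ^ (k:ℝ)) ^ t := by positivity
    have hfinal : (T.card : ℝ) * ((2:ℝ) ^ (k:ℝ)) ^ t ≤ M * ((2:ℝ) ^ (k:ℝ)) ^ t := by
      calc (T.card : ℝ) * ((2:ℝ) ^ (k:ℝ)) ^ t ≤ 2 ^ (t+1) * (((P ∩ Bk).ncard : ℝ)) := hTsum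
        _ ≤ 2 ^ (t+1) * ((D:ℝ)^2 * (C * (2 ^ ((k:ℝ)+1) * δ) ^ t * (covNum δ P : ℝ))) := by
            apply mul_le_mul_of_nonneg_left hstep3 (Real.rpow_nonneg two_pos.le _)
        _ ≤ ((2:ℝ) ^ (k:ℝ)) ^ t * M := hrpalg
        _ = M * ((2:ℝ) ^ (k:ℝ)) ^ t := mul_comm _ _
    exact le_of_mul_le_mul_right hfinal h2kt
  -- total
  have hsum : ((s.card : ℝ)) ≤ ((K:ℝ) + 1) * M := by
    have := hfib
    have hcast : ((s.card : ℝ)) = ∑ k ∈ Finset.range (K+1),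
        (((s.filter (fun j => kf j = k)).card : ℕ) : ℝ) := by
      rw [hfib]; push_cast; ring
    rw [hcast]
    calc (∑ k ∈ Finset.range (K+1), (((s.filter (fun j => kf j = k)).card : ℕ) : ℝ))
        ≤ ∑ k ∈ Finset.range (K+1), M := Finset.sum_le_sum hfibbound
      _ = ((K:ℝ)+1) * M := by
          rw [Finset.sum_const, nsmul_eq_mul, Finset.card_range]
          push_cast; ring
  have h1M' : (1:ℝ) ≤ M := by
    rw [hM]
    nlinarith
  have hNbound : (N : ℝ) ≤ ((K:ℝ) + 2) * M := by
    have : (N : ℝ) ≤ (s.card : ℝ) + 1 := by exact_mod_cast hNs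
    calc (N : ℝ) ≤ (s.card : ℝ) + 1 := this
      _ ≤ ((K:ℝ)+1) * M + 1 := by linarith
      _ ≤ ((K:ℝ)+1) * M + M := by linarith
      _ = ((K:ℝ)+2) * M := by ring
  have hKA : ((K:ℝ) + 2) * A ≤ δ ^ (-ε) := hδ₀ δ hδ hδle
  have hchain : (N:ℝ) ≤ δ ^ (-ε) * (C * δ ^ t * cardP) := by
    calc (N:ℝ) ≤ ((K:ℝ)+2) * M := hNbound
      _ = (((K:ℝ)+2) * A) * (C * δ ^ t * cardP) := by rw [hM]; ring
      _ ≤ δ ^ (-ε) * (C * δ ^ t * cardP) := mul_le_mul_of_nonneg_right hKA hCpos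
  have hfinal : δ ^ (-ε) * (C * δ ^ t * cardP) = C * cardP * δ ^ (t - ε) := by
    rw [show t - ε = t + (-ε) by ring, Real.rpow_add hδ]
    ring
  rw [Nat.card_coe_set_eq]
  rw [← hcardP]
  linarith [hchain, hfinal ▸ hchain]
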